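/- Let q > 0 and let K be a convex body in ℝ^n with o ∈ ∂K. Then the q-th dual curvature measure of the set of outer normals at the origin vanishes: C̃_{q,K}({v ∈ S^{n-1} : h_K(v) = 0}) = 0. -/

import Mathlib

open MeasureTheory
open scoped RealInnerProductSpace

/-- The support function of a set `K`: `h_K(v) = sup_{x ∈ K} ⟨x, v⟩`. -/
noncomputable def suppFn {n : ℕ} (K : Set (EuclideanSpace ℝ (Fin n)))
    (v : EuclideanSpace ℝ (Fin n)) : ℝ :=
  sSup ((fun x => ⟪x, v⟫) '' K)

/-- The radial function of a set `K` containing the origin: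
`ρ_K(w) = max{t ≥ 0 : t•w ∈ K}`. -/
noncomputable def radialFn {n : ℕ} (K : Set (EuclideanSpace ℝ (Fin n)))
    (w : EuclideanSpace ℝ (Fin n)) : ℝ :=
  sSup {t : ℝ | 0 ≤ t ∧ t • w ∈ K}

open Metric Set Module Filter
open scoped NNReal ENNReal Topology Pointwise

noncomputable section Aux

/-- normalization map is 2-Lipschitz on the region outside the unit ball -/
lemma lipschitz_normalize {E : Type*} [NormedAddCommGroup E] [NormedSpace ℝ E] :
    LipschitzOnWith 2 (fun x : E => ‖x‖⁻¹ • x) {x : E | 1 ≤ ‖x‖} := by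
  apply LipschitzOnWith.of_dist_le_mul
  intro x hx y hy
  simp only [Set.mem_setOf_eq] at hx hy
  have hxp : (0:ℝ) < ‖x‖ := lt_of_lt_of_le one_pos hx
  have hyp : (0:ℝ) < ‖y‖ := lt_of_lt_of_le one_pos hy
  rw [dist_eq_norm, dist_eq_norm]
  have hc2 : ((2:ℝ≥0):ℝ) = 2 := by norm_num
  rw [hc2]
  have key : ‖x‖⁻¹ • x - ‖y‖⁻¹ • y = ‖x‖⁻¹ • (x - y) + (‖x‖⁻¹ - ‖y‖⁻¹) • y := by
    rw [smul_sub, sub_smul]; abel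
  rw [key]
  have h1 : ‖‖x‖⁻¹ • (x - y)‖ = ‖x‖⁻¹ * ‖x - y‖ := by
    rw [norm_smul, Real.norm_eq_abs, abs_of_pos (inv_pos.2 hxp)]
  have h2 : ‖(‖x‖⁻¹ - ‖y‖⁻¹) • y‖ = |‖x‖⁻¹ - ‖y‖⁻¹| * ‖y‖ := by
    rw [norm_smul, Real.norm_eq_abs]
  have h3 : |‖x‖⁻¹ - ‖y‖⁻¹| * ‖y‖ ≤ ‖x‖⁻¹ * ‖x - y‖ := by
    have : ‖x‖⁻¹ - ‖y‖⁻¹ = (‖y‖ - ‖x‖) * (‖x‖⁻¹ * ‖y‖⁻¹) := by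
      field_simp
    rw [this, abs_mul, abs_of_pos (mul_pos (inv_pos.2 hxp) (inv_pos.2 hyp))]
    have h4 : |‖y‖ - ‖x‖| ≤ ‖x - y‖ := by
      rw [abs_sub_comm]
      exact (abs_norm_sub_norm_le x y)
    calc |‖y‖ - ‖x‖| * (‖x‖⁻¹ * ‖y‖⁻¹) * ‖y‖ = |‖y‖ - ‖x‖| * ‖x‖⁻¹ * (‖y‖⁻¹ * ‖y‖) := by ring
    _ = |‖y‖ - ‖x‖| * ‖x‖⁻¹ := by rw [inv_mul_cancel₀ hyp.ne']; ring
    _ ≤ ‖x - y‖ * ‖x‖⁻¹ := by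
        apply mul_le_mul_of_nonneg_right h4 (inv_pos.2 hxp).le
    _ = ‖x‖⁻¹ * ‖x - y‖ := by ring
  have hinv : ‖x‖⁻¹ ≤ 1 := by
    rw [inv_le_one_iff₀]; right; exact hx
  calc ‖‖x‖⁻¹ • (x - y) + (‖x‖⁻¹ - ‖y‖⁻¹) • y‖
      ≤ ‖‖x‖⁻¹ • (x - y)‖ + ‖(‖x‖⁻¹ - ‖y‖⁻¹) • y‖ := norm_add_le _ _
    _ ≤ ‖x‖⁻¹ * ‖x - y‖ + ‖x‖⁻¹ * ‖x - y‖ := by rw [h1, h2]; exact add_le_add le_rfl h3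
    _ = (2 * ‖x‖⁻¹) * ‖x - y‖ := by ring
    _ ≤ 2 * ‖x - y‖ := by
        apply mul_le_mul_of_nonneg_right _ (norm_nonneg _)
        nlinarith

variable {m : ℕ}

def psi (i : Fin (m+1)) (σ : ℝ) (y : EuclideanSpace ℝ (Fin m)) :
    EuclideanSpace ℝ (Fin (m+1)) := WithLp.toLp 2 (Fin.insertNth (α := fun _ => ℝ) i σ y.ofLp)

lemma psi_isometry (i : Fin (m+1)) (σ : ℝ) : Isometry (psi i σ) := by
  apply Isometry.of_dist_eq
  intro y z
  rw [EuclideanSpace.dist_eq, EuclideanSpace.dist_eq]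
  congr 1
  rw [Fin.sum_univ_succAbove (fun j => dist (psi i σ y j) (psi i σ z j) ^ 2) i]
  simp [psi, Fin.insertNth_apply_same, Fin.insertNth_apply_succAbove]

lemma psi_apply_same (i : Fin (m+1)) (σ : ℝ) (y : EuclideanSpace ℝ (Fin m)) :
    psi i σ y i = σ := by
  simp [psi]

lemma psi_removeNth (i : Fin (m+1)) (σ : ℝ) (x : EuclideanSpace ℝ (Fin (m+1)))
    (hx : x i = σ) : psi i σ (WithLp.toLp 2 (i.removeNth x)) = x := by
  unfold psi
  rw [← hx]
  simp [Fin.insertNth_self_removeNth]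

lemma psi_combo (i : Fin (m+1)) (σ : ℝ) (y z : EuclideanSpace ℝ (Fin m))
    (a b : ℝ) (hab : a + b = 1) :
    psi i σ (a • y + b • z) = a • psi i σ y + b • psi i σ z := by
  refine PiLp.ext fun k => ?_
  revert k
  rw [Fin.forall_iff_succAbove i]
  constructor
  · show psi i σ _ i = a * psi i σ y i + b * psi i σ z i
    rw [psi_apply_same, psi_apply_same, psi_apply_same]
    linear_combination -σ * hab
  · intro j
    show psi i σ _ (i.succAbove j) = a * psi i σ y (i.succAbove j) + b * psi i σ z (i.succAbove j)
    simp [psi, Fin.insertNth_apply_succAbove]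

lemma hausdorff_null_of_volume_null {m : ℕ} {s : Set (EuclideanSpace ℝ (Fin m))}
    (hs : volume s = 0) : μH[(m:ℝ)] s = 0 := by
  haveI : (μH[(m:ℝ)] : Measure (EuclideanSpace ℝ (Fin m))).IsAddHaarMeasure := by
    have h := MeasureTheory.isAddHaarMeasure_hausdorffMeasure
      (E := EuclideanSpace ℝ (Fin m))
    rwa [finrank_euclideanSpace_fin] at h
  rw [MeasureTheory.Measure.isAddLeftInvariant_eq_smul
    (μH[(m:ℝ)] : Measure (EuclideanSpace ℝ (Fin m))) volume]
  simp [hs]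

lemma interior_closure_subset_of_open_convex {E : Type*} [NormedAddCommGroup E]
    [NormedSpace ℝ E] {C : Set E} (hC : Convex ℝ C) (hCo : IsOpen C) :
    interior (closure C) ⊆ C := by
  intro x hx
  rcases C.eq_empty_or_nonempty with h | ⟨c, hc⟩
  · rw [h] at hx; simp at hx
  by_cases hxc : x = c
  · rwa [hxc]
  obtain ⟨r, hr, hball⟩ := Metric.isOpen_iff.1 isOpen_interior x hx
  have hxc' : (0:ℝ) < ‖x - c‖ := by
    rw [norm_pos_iff]; exact sub_ne_zero.2 hxc
  set δ : ℝ := r / (2 * ‖x - c‖) with hδdef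
  have hδ : 0 < δ := by positivity
  set z := x + δ • (x - c) with hzdef
  have hz : z ∈ closure C := by
    apply interior_subset (hball ?_)
    have : dist z x = δ * ‖x - c‖ := by
      rw [dist_eq_norm, hzdef]
      simp [norm_smul, abs_of_pos hδ]
    rw [mem_ball, this, hδdef]
    rw [div_mul_eq_mul_div]
    rw [div_lt_iff₀ (by positivity)]
    nlinarith [hxc', hr]
  have h1δ : (0:ℝ) < 1 + δ := by linarith
  have hcombo : (1/(1+δ)) • z + (δ/(1+δ)) • c = x := by
    rw [hzdef]
    rw [smul_add, smul_smul, smul_sub]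
    match_scalars <;> field_simp <;> ring
  have hcint : c ∈ interior C := by rwa [hCo.interior_eq]
  have := hC.combo_closure_interior_mem_interior hz hcint
    (by positivity : (0:ℝ) ≤ 1/(1+δ)) (by positivity : (0:ℝ) < δ/(1+δ))
    (by field_simp)
  rw [hcombo] at this
  rwa [hCo.interior_eq] at this

lemma smul_mem_closure_of_cone {E : Type*} [NormedAddCommGroup E] [NormedSpace ℝ E]
    {C : Set E} (hcone : ∀ t : ℝ, 0 < t → ∀ x ∈ C, t • x ∈ C)
    {t : ℝ} (ht : 0 < t) {y : E} (hy : y ∈ closure C) : t • y ∈ closure C := by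
  have h1 : t • y ∈ (fun z : E => t • z) '' closure C := ⟨y, hy, rfl⟩
  have h2 := image_closure_subset_closure_image (f := fun z : E => t • z)
    (continuous_const_smul t) (s := C)
  have h3 : (fun z : E => t • z) '' C ⊆ C := by
    rintro _ ⟨w, hw, rfl⟩; exact hcone t ht w hw
  exact closure_mono h3 (h2 h1)

lemma hyperplane_null (i : Fin (m+1)) (σ : ℝ) (hσ : σ * σ = 1)
    {C : Set (EuclideanSpace ℝ (Fin (m+1)))} (hC : Convex ℝ C) (hCo : IsOpen C)
    (hcone : ∀ t : ℝ, 0 < t → ∀ x ∈ C, t • x ∈ C) :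
    μH[(m:ℝ)] (frontier C ∩ {x | x i = σ}) = 0 := by
  have hψ := psi_isometry i σ
  set D : Set (EuclideanSpace ℝ (Fin m)) := psi i σ ⁻¹' (closure C) with hD
  have hDconv : Convex ℝ D := by
    intro y hy z hz a b ha hb hab
    show psi i σ (a • y + b • z) ∈ closure C
    rw [psi_combo i σ y z a b hab]
    exact hC.closure hy hz ha hb hab
  have hDclosed : IsClosed D := isClosed_closure.preimage hψ.continuous
  have key : frontier C ∩ {x | x i = σ} ⊆ psi i σ '' (frontier D) := by
    rintro x ⟨hxf, hxi⟩
    rw [hCo.frontier_eq] at hxf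
    have hψw : psi i σ (WithLp.toLp 2 (i.removeNth x)) = x := psi_removeNth i σ x hxi
    refine ⟨WithLp.toLp 2 (i.removeNth x), ?_, hψw⟩
    rw [hDclosed.frontier_eq, Set.mem_diff]
    constructor
    · show psi i σ (WithLp.toLp 2 (i.removeNth x)) ∈ closure C
      rw [hψw]; exact hxf.1
    · intro hw
      obtain ⟨ε, hε, hball⟩ := Metric.isOpen_iff.1 isOpen_interior _ hw
      have hx_int : x ∈ interior (closure C) := by
        rw [mem_interior]
        refine ⟨{z | 0 < σ * z i ∧ dist ((σ * z i)⁻¹ • z) x < ε}, ?_, ?_, ?_⟩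
        · rintro z ⟨hz1, hz2⟩
          set t := σ * z i with htdef
          have hzi : z i = σ * t := by rw [htdef]; rw [← mul_assoc, hσ, one_mul]
          set y := t⁻¹ • z with hydef
          have hyi : y i = σ := by
            show t⁻¹ * z i = σ
            rw [hzi, mul_comm σ t, ← mul_assoc, inv_mul_cancel₀ hz1.ne', one_mul]
          have hψy : psi i σ (WithLp.toLp 2 (i.removeNth y)) = y := psi_removeNth i σ y hyi
          set yr : EuclideanSpace ℝ (Fin m) := WithLp.toLp 2 (i.removeNth y) with hyrdef
          set xr : EuclideanSpace ℝ (Fin m) := WithLp.toLp 2 (i.removeNth x) with hxrdef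
          have hydist : dist yr xr < ε := by
            have hde := hψ.dist_eq yr xr
            rw [hψy, hψw] at hde
            rw [hde] at hz2
            exact hz2
          have hyD : yr ∈ D := interior_subset (hball (Metric.mem_ball.2 hydist))
          have hyC : y ∈ closure C := by
            have h5 : psi i σ yr ∈ closure C := hyD
            rwa [hψy] at h5
          have hzy : z = t • y := by rw [hydef, smul_inv_smul₀ hz1.ne']
          rw [hzy]
          exact smul_mem_closure_of_cone hcone hz1 hyC
        · have : {z : EuclideanSpace ℝ (Fin (m+1)) |
              0 < σ * z i ∧ dist ((σ * z i)⁻¹ • z) x < ε} =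
              {z : EuclideanSpace ℝ (Fin (m+1)) | 0 < σ * z i} ∩
              (fun z : EuclideanSpace ℝ (Fin (m+1)) => (σ * z i)⁻¹ • z) ⁻¹' (Metric.ball x ε) := by
            ext z; simp [Metric.mem_ball]
          rw [this]
          have hci : Continuous fun z : EuclideanSpace ℝ (Fin (m+1)) => σ * z i :=
            continuous_const.mul ((EuclideanSpace.proj i).continuous)
          apply ContinuousOn.isOpen_inter_preimage
          · exact ((hci.continuousOn.inv₀ (fun z hz => ne_of_gt hz)).smul continuousOn_id)
          · exact isOpen_lt continuous_const hci
          · exact Metric.isOpen_ball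
        · constructor
          · show 0 < σ * x i
            rw [hxi, hσ]; exact one_pos
          · have : σ * x i = 1 := by rw [hxi, hσ]
            rw [this]
            simp [hε]
      exact hxf.2 (interior_closure_subset_of_open_convex hC hCo hx_int)
  have h1 : μH[(m:ℝ)] (frontier C ∩ {x | x i = σ}) ≤ μH[(m:ℝ)] (psi i σ '' (frontier D)) :=
    measure_mono key
  rw [hψ.hausdorffMeasure_image (Or.inl (by positivity))] at h1
  have h2 : μH[(m:ℝ)] (frontier D) = 0 :=
    hausdorff_null_of_volume_null (hDconv.addHaar_frontier volume)
  rw [h2] at h1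
  exact le_zero_iff.1 h1

lemma coord_abs_le_norm (x : EuclideanSpace ℝ (Fin (m+1))) (i : Fin (m+1)) :
    |x i| ≤ ‖x‖ := by
  rw [EuclideanSpace.norm_eq]
  have h1 : |x i| = Real.sqrt (‖x i‖ ^ 2) := by
    rw [Real.sqrt_sq_eq_abs, Real.norm_eq_abs, abs_abs]
  rw [h1]
  apply Real.sqrt_le_sqrt
  exact Finset.single_le_sum (f := fun j => ‖x j‖ ^ 2)
    (fun j _ => by positivity) (Finset.mem_univ i)

lemma sphere_frontier_null {C : Set (EuclideanSpace ℝ (Fin (m+1)))}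
    (hC : Convex ℝ C) (hCo : IsOpen C)
    (hcone : ∀ t : ℝ, 0 < t → ∀ x ∈ C, t • x ∈ C) :
    μH[(m:ℝ)] {v : EuclideanSpace ℝ (Fin (m+1)) | ‖v‖ = 1 ∧ v ∈ frontier C} = 0 := by
  have hfro : ∀ t : ℝ, 0 < t → ∀ x ∈ frontier C, t • x ∈ frontier C := by
    intro t ht x hx
    rw [hCo.frontier_eq] at hx ⊢
    refine ⟨?_, fun h => hx.2 ?_⟩
    · have h1 : t • x ∈ (fun z : EuclideanSpace ℝ (Fin (m+1)) => t • z) '' closure C :=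
        ⟨x, hx.1, rfl⟩
      have h2 := image_closure_subset_closure_image
        (f := fun z : EuclideanSpace ℝ (Fin (m+1)) => t • z) (continuous_const_smul t) (s := C)
      have h3 : (fun z : EuclideanSpace ℝ (Fin (m+1)) => t • z) '' C ⊆ C := by
        rintro _ ⟨w, hw, rfl⟩; exact hcone t ht w hw
      exact closure_mono h3 (h2 h1)
    · have h4 := hcone t⁻¹ (inv_pos.2 ht) _ h
      rwa [inv_smul_smul₀ ht.ne'] at h4
  set W : Fin (m+1) × Bool → Set (EuclideanSpace ℝ (Fin (m+1))) :=
    fun p => frontier C ∩ {x | x p.1 = (if p.2 then (1:ℝ) else -1)} with hWdef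
  have hWsub : ∀ p, W p ⊆ {x : EuclideanSpace ℝ (Fin (m+1)) | 1 ≤ ‖x‖} := by
    rintro ⟨j, b⟩ x ⟨_, hx2⟩
    have := coord_abs_le_norm x j
    rw [hx2] at this
    cases b <;> simp at this <;> exact this
  have cover : {v : EuclideanSpace ℝ (Fin (m+1)) | ‖v‖ = 1 ∧ v ∈ frontier C} ⊆
      ⋃ p : Fin (m+1) × Bool,
        (fun x : EuclideanSpace ℝ (Fin (m+1)) => ‖x‖⁻¹ • x) '' (W p) := by
    rintro v ⟨hv1, hv2⟩
    have hvne : v ≠ 0 := by intro h; rw [h, norm_zero] at hv1; norm_num at hv1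
    have : ∃ i, v i ≠ 0 := by
      by_contra h
      push_neg at h
      exact hvne (by ext j; exact h j)
    obtain ⟨i, hi⟩ := this
    set b : Bool := decide (0 < v i) with hbdef
    set σ : ℝ := if b then (1:ℝ) else -1 with hσdef
    have hσpos : 0 < σ * v i := by
      rcases lt_trichotomy (v i) 0 with h | h | h
      · have hb : b = false := by rw [hbdef]; simp; linarith
        rw [hσdef, hb]; simp; linarith
      · exact absurd h hi
      · have hb : b = true := by rw [hbdef]; simp [h]
        rw [hσdef, hb]; simpa using h
    have hσσ : σ * σ = 1 := by rcases b with _ | _ <;> simp [hσdef]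
    set t : ℝ := (σ * v i)⁻¹ with htdef
    have ht : 0 < t := inv_pos.2 hσpos
    refine Set.mem_iUnion.2 ⟨(i, b), ?_⟩
    refine ⟨t • v, ⟨hfro t ht v hv2, ?_⟩, ?_⟩
    · show (t • v) i = σ
      show t * v i = σ
      have hσinv : σ⁻¹ = σ := inv_eq_of_mul_eq_one_left hσσ
      rw [htdef, mul_inv, mul_assoc, inv_mul_cancel₀ hi, mul_one, hσinv]
    · have hnorm : ‖t • v‖ = t := by
        rw [norm_smul, hv1, Real.norm_eq_abs, abs_of_pos ht, mul_one]
      show ‖t • v‖⁻¹ • (t • v) = v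
      rw [hnorm, inv_smul_smul₀ ht.ne']
  refine measure_mono_null cover (measure_iUnion_null ?_)
  intro p
  set σ : ℝ := if p.2 then (1:ℝ) else -1 with hσdef
  have hσσ : σ * σ = 1 := by
    rw [hσdef]; cases hb : p.2 <;> simp [hb]
  have hWnull : μH[(m:ℝ)] (W p) = 0 := hyperplane_null p.1 σ hσσ hC hCo hcone
  have hlip : LipschitzOnWith 2 (fun x : EuclideanSpace ℝ (Fin (m+1)) => ‖x‖⁻¹ • x) (W p) :=
    lipschitz_normalize.mono (hWsub p)
  have h6 := hlip.hausdorffMeasure_image_le (by positivity : (0:ℝ) ≤ (m:ℝ))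
  rw [hWnull, mul_zero] at h6
  exact le_zero_iff.1 h6

section radial

variable {n : ℕ} {K : Set (EuclideanSpace ℝ (Fin n))}

lemma radial_bddAbove (hK : IsCompact K) {v : EuclideanSpace ℝ (Fin n)} (hv : v ≠ 0) :
    BddAbove {t : ℝ | 0 ≤ t ∧ t • v ∈ K} := by
  obtain ⟨R, hR⟩ := hK.isBounded.subset_closedBall 0
  refine ⟨R / ‖v‖, fun t ht => ?_⟩
  have h1 : ‖t • v‖ ≤ R := by
    have := hR ht.2
    rwa [Metric.mem_closedBall, dist_zero_right] at this
  rw [norm_smul, Real.norm_eq_abs, abs_of_nonneg ht.1] at h1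
  rw [le_div_iff₀ (norm_pos_iff.2 hv)]
  exact h1

lemma radialFn_zero_zero (h0K : (0 : EuclideanSpace ℝ (Fin n)) ∈ K) :
    radialFn K (0 : EuclideanSpace ℝ (Fin n)) = 0 := by
  unfold radialFn
  have h1 : {t : ℝ | 0 ≤ t ∧ t • (0 : EuclideanSpace ℝ (Fin n)) ∈ K} = Set.Ici 0 := by
    ext t; simp [h0K]
  rw [h1, csSup_of_not_bddAbove (by simpa using not_bddAbove_Ici (0:ℝ))]
  exact Real.sSup_empty

lemma radialFn_nonneg (h0K : (0 : EuclideanSpace ℝ (Fin n)) ∈ K)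
    (v : EuclideanSpace ℝ (Fin n)) : 0 ≤ radialFn K v := by
  by_cases hb : BddAbove {t : ℝ | 0 ≤ t ∧ t • v ∈ K}
  · exact le_csSup hb (by simp [h0K])
  · unfold radialFn
    rw [csSup_of_not_bddAbove hb, Real.sSup_empty]

lemma radialFn_mem (hK : IsCompact K) (h0K : (0 : EuclideanSpace ℝ (Fin n)) ∈ K)
    {v : EuclideanSpace ℝ (Fin n)} (hv : v ≠ 0) : (radialFn K v) • v ∈ K := by
  have hclosed : IsClosed {t : ℝ | 0 ≤ t ∧ t • v ∈ K} := by
    have : {t : ℝ | 0 ≤ t ∧ t • v ∈ K} =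
        Set.Ici 0 ∩ (fun t : ℝ => t • v) ⁻¹' K := by ext t; simp [Set.mem_Ici]
    rw [this]
    exact isClosed_Ici.inter (hK.isClosed.preimage (continuous_id.smul continuous_const))
  have hne : {t : ℝ | 0 ≤ t ∧ t • v ∈ K}.Nonempty := ⟨0, le_refl 0, by simpa using h0K⟩
  exact (hclosed.csSup_mem hne (radial_bddAbove hK hv)).2

lemma radialFn_ne_zero_iff (hK : IsCompact K) (hconv : Convex ℝ K)
    (h0K : (0 : EuclideanSpace ℝ (Fin n)) ∈ K) (v : EuclideanSpace ℝ (Fin n)) :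
    radialFn K v ≠ 0 ↔ v ≠ 0 ∧ ∃ k : ℕ, ((k:ℝ)+1)⁻¹ • v ∈ K := by
  constructor
  · intro hne
    have hvne : v ≠ 0 := by
      rintro rfl; exact hne (radialFn_zero_zero h0K)
    have hρpos : 0 < radialFn K v := lt_of_le_of_ne (radialFn_nonneg h0K v) (Ne.symm hne)
    have hmem : radialFn K v • v ∈ K := radialFn_mem hK h0K hvne
    obtain ⟨k, hk⟩ := exists_nat_gt (radialFn K v)⁻¹
    refine ⟨hvne, k, ?_⟩
    set ρ := radialFn K v
    set a : ℝ := ((k:ℝ)+1)⁻¹ with hadef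
    have ha : 0 < a := by positivity
    have hale : a ≤ ρ := by
      rw [hadef]
      rw [inv_le_comm₀ (by positivity) hρpos]
      linarith
    set c : ℝ := a * ρ⁻¹ with hcdef
    have hc0 : 0 ≤ c := by positivity
    have hc1 : c ≤ 1 := by
      rw [hcdef]
      rw [← div_eq_mul_inv, div_le_one hρpos]
      exact hale
    have hcombo := hconv hmem h0K hc0 (by linarith : (0:ℝ) ≤ 1 - c) (by ring)
    have heq : c • (ρ • v) + (1 - c) • (0 : EuclideanSpace ℝ (Fin n)) = a • v := by
      rw [smul_zero, add_zero, smul_smul, hcdef, mul_assoc, inv_mul_cancel₀ hρpos.ne',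
        mul_one]
    rwa [heq] at hcombo
  · rintro ⟨hvne, k, hk⟩
    have ha : (0:ℝ) < ((k:ℝ)+1)⁻¹ := by positivity
    have hmem : ((k:ℝ)+1)⁻¹ ∈ {t : ℝ | 0 ≤ t ∧ t • v ∈ K} := ⟨ha.le, hk⟩
    have := le_csSup (radial_bddAbove hK hvne) hmem
    intro h
    unfold radialFn at h
    rw [h] at this
    linarith

lemma Z_measurable (hK : IsCompact K) (hconv : Convex ℝ K)
    (h0K : (0 : EuclideanSpace ℝ (Fin n)) ∈ K) :
    MeasurableSet {v : EuclideanSpace ℝ (Fin n) | radialFn K v = 0} := by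
  have h1 : {v : EuclideanSpace ℝ (Fin n) | radialFn K v = 0} =
      ({(0 : EuclideanSpace ℝ (Fin n))}ᶜ ∩
        ⋃ k : ℕ, (fun v : EuclideanSpace ℝ (Fin n) => ((k:ℝ)+1)⁻¹ • v) ⁻¹' K)ᶜ := by
    ext v
    rw [Set.mem_compl_iff]
    constructor
    · intro h hmem
      obtain ⟨hvne, hun⟩ := hmem
      obtain ⟨k, hk⟩ := Set.mem_iUnion.1 hun
      have : radialFn K v ≠ 0 := (radialFn_ne_zero_iff hK hconv h0K v).2
        ⟨fun h0 => hvne (by simp [h0]), k, hk⟩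
      exact this h
    · intro h
      by_contra hne
      obtain ⟨hvne, k, hk⟩ := (radialFn_ne_zero_iff hK hconv h0K v).1 hne
      exact h ⟨by simpa using hvne, Set.mem_iUnion.2 ⟨k, hk⟩⟩
  rw [h1]
  apply MeasurableSet.compl
  apply MeasurableSet.inter
  · exact (measurableSet_singleton _).compl
  · exact MeasurableSet.iUnion fun k =>
      (hK.isClosed.preimage (continuous_const_smul _)).measurableSet

end radial

theorem stmt_18 (n : ℕ) (hn : 2 ≤ n) (q : ℝ) (hq : 0 < q)
    (K : Set (EuclideanSpace ℝ (Fin n)))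
    (hK : IsCompact K) (hconv : Convex ℝ K) (hint : (interior K).Nonempty)
    (h0K : (0 : EuclideanSpace ℝ (Fin n)) ∈ K)
    (h0bd : (0 : EuclideanSpace ℝ (Fin n)) ∈ frontier K) :
    ∫ v in {v : EuclideanSpace ℝ (Fin n) | v ∈ Metric.sphere 0 1 ∧
        ∃ u : EuclideanSpace ℝ (Fin n), ‖u‖ = 1 ∧
          (∀ y ∈ K, ⟪y, u⟫ ≤ ⟪radialFn K v • v, u⟫) ∧ suppFn K u = 0},
      (radialFn K v) ^ q ∂(μH[(n : ℝ) - 1]) = 0 := by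
  obtain ⟨m, rfl⟩ : ∃ m, n = m + 1 := ⟨n - 1, by omega⟩
  have hexp : ((m + 1 : ℕ) : ℝ) - 1 = (m : ℝ) := by push_cast; ring
  rw [hexp]
  obtain ⟨p₀, hp₀⟩ := hint
  set C : Set (EuclideanSpace ℝ (Fin (m+1))) :=
    {x | ∃ t : ℝ, 0 < t ∧ ∃ p ∈ interior K, x = t • p} with hCdef
  have hCo : IsOpen C := by
    have h1 : C = ⋃ t : {t : ℝ // 0 < t}, (t.1 : ℝ) • interior K := by
      ext x
      simp only [hCdef, Set.mem_setOf_eq, Set.mem_iUnion, Set.mem_smul_set]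
      constructor
      · rintro ⟨t, ht, p, hp, rfl⟩; exact ⟨⟨t, ht⟩, p, hp, rfl⟩
      · rintro ⟨⟨t, ht⟩, p, hp, rfl⟩; exact ⟨t, ht, p, hp, rfl⟩
    rw [h1]
    exact isOpen_iUnion fun t => isOpen_interior.smul₀ (ne_of_gt t.2)
  have hCconv : Convex ℝ C := by
    rintro x ⟨t₁, ht₁, p₁, hp₁, rfl⟩ y ⟨t₂, ht₂, p₂, hp₂, rfl⟩ a b ha hb hab
    rcases eq_or_lt_of_le ha with rfl | ha'
    · simp only [zero_smul, zero_add]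
      rw [show b = 1 by linarith, one_smul]
      exact ⟨t₂, ht₂, p₂, hp₂, rfl⟩
    rcases eq_or_lt_of_le hb with rfl | hb'
    · simp only [zero_smul, add_zero]
      rw [show a = 1 by linarith, one_smul]
      exact ⟨t₁, ht₁, p₁, hp₁, rfl⟩
    have hs : 0 < a * t₁ + b * t₂ := by positivity
    refine ⟨a * t₁ + b * t₂, hs,
      (a * t₁ / (a * t₁ + b * t₂)) • p₁ + (b * t₂ / (a * t₁ + b * t₂)) • p₂, ?_, ?_⟩
    · exact (hconv.interior) hp₁ hp₂ (by positivity) (by positivity) (by field_simp)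
    · rw [smul_add, smul_smul, smul_smul, smul_smul, smul_smul]
      congr 1 <;> congr 1 <;> field_simp
  have hcone : ∀ t : ℝ, 0 < t → ∀ x ∈ C, t • x ∈ C := by
    rintro t ht x ⟨s, hs, p, hp, rfl⟩
    exact ⟨t * s, by positivity, p, hp, smul_smul t s p⟩
  set N : Set (EuclideanSpace ℝ (Fin (m+1))) := {v | ‖v‖ = 1 ∧ v ∈ frontier C} with hNdef
  have hN : μH[(m:ℝ)] N = 0 := sphere_frontier_null hCconv hCo hcone
  have hNmeas : MeasurableSet N := by
    have : N = {v : EuclideanSpace ℝ (Fin (m+1)) | ‖v‖ = 1} ∩ frontier C := rfl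
    rw [this]
    exact ((isClosed_eq continuous_norm continuous_const).inter isClosed_frontier).measurableSet
  set Z : Set (EuclideanSpace ℝ (Fin (m+1))) := {v | radialFn K v = 0} with hZdef
  have hZmeas : MeasurableSet Z := Z_measurable hK hconv h0K
  set A : Set (EuclideanSpace ℝ (Fin (m+1))) :=
    {v | v ∈ Metric.sphere 0 1 ∧ ∃ u : EuclideanSpace ℝ (Fin (m+1)), ‖u‖ = 1 ∧
      (∀ y ∈ K, ⟪y, u⟫ ≤ ⟪radialFn K v • v, u⟫) ∧ suppFn K u = 0} with hAdef
  have hAsub : A ⊆ N ∪ Z := by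
    rintro v ⟨hv1, u, hu1, hu2, hu3⟩
    have hvnorm : ‖v‖ = 1 := by rwa [mem_sphere_zero_iff_norm] at hv1
    have hvne : v ≠ 0 := by
      intro h; rw [h, norm_zero] at hvnorm; norm_num at hvnorm
    by_cases hρ : radialFn K v = 0
    · exact Or.inr hρ
    · left
      have hρpos : 0 < radialFn K v :=
        lt_of_le_of_ne (radialFn_nonneg h0K v) (Ne.symm hρ)
      have hmem : radialFn K v • v ∈ K := radialFn_mem hK h0K hvne
      have hbdd : BddAbove ((fun x : EuclideanSpace ℝ (Fin (m+1)) => ⟪x, u⟫) '' K) :=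
        hK.bddAbove_image ((continuous_id.inner continuous_const).continuousOn)
      have hKle : ∀ y ∈ K, ⟪y, u⟫ ≤ 0 := by
        intro y hy
        have := le_csSup hbdd ⟨y, hy, rfl⟩
        rwa [show sSup ((fun x : EuclideanSpace ℝ (Fin (m+1)) => ⟪x, u⟫) '' K) = 0 from hu3]
          at this
      have h2 : (0:ℝ) ≤ ⟪radialFn K v • v, u⟫ := by
        have := hu2 0 h0K
        simpa using this
      have h1 : ⟪radialFn K v • v, u⟫ ≤ 0 := hKle _ hmem
      have hvu : ⟪v, u⟫ = 0 := by
        have h3 : radialFn K v * ⟪v, u⟫ = 0 := by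
          have h4 := le_antisymm h1 h2
          rwa [real_inner_smul_left] at h4
        rcases mul_eq_zero.1 h3 with h | h
        · exact absurd h hρ
        · exact h
      have hclosureC : v ∈ closure C := by
        set ρ := radialFn K v with hρdef
        set w := ρ • v with hwdef
        have t1 : Tendsto (fun k : ℕ => ((k:ℝ)+1)⁻¹) atTop (𝓝 0) := by
          simpa [one_div] using tendsto_one_div_add_atTop_nhds_zero_nat (𝕜 := ℝ)
        have t2 : Tendsto (fun k : ℕ => (((k:ℝ)+1)⁻¹) • p₀) atTop (𝓝 ((0:ℝ) • p₀)) :=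
          t1.smul_const p₀
        have t3 : Tendsto (fun k : ℕ => (1 - ((k:ℝ)+1)⁻¹)) atTop (𝓝 (1:ℝ)) := by
          have h := t1.const_sub (1:ℝ)
          simpa using h
        have t4 : Tendsto (fun k : ℕ => (1 - ((k:ℝ)+1)⁻¹) • w) atTop (𝓝 ((1:ℝ) • w)) :=
          t3.smul_const w
        have t5 : Tendsto
            (fun k : ℕ => ρ⁻¹ • ((((k:ℝ)+1)⁻¹) • p₀ + (1 - ((k:ℝ)+1)⁻¹) • w)) atTop
            (𝓝 (ρ⁻¹ • ((0:ℝ) • p₀ + (1:ℝ) • w))) :=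
          (t2.add t4).const_smul ρ⁻¹
        have hlim : ρ⁻¹ • ((0:ℝ) • p₀ + (1:ℝ) • w) = v := by
          rw [zero_smul, zero_add, one_smul, hwdef, inv_smul_smul₀ hρpos.ne']
        rw [hlim] at t5
        apply mem_closure_of_tendsto t5
        apply Filter.Eventually.of_forall
        intro k
        have hak : (0:ℝ) < ((k:ℝ)+1)⁻¹ := by positivity
        have hak1 : ((k:ℝ)+1)⁻¹ ≤ 1 := by
          rw [inv_le_one_iff₀]; right; linarith [Nat.cast_nonneg (α := ℝ) k]
        have hintk : (((k:ℝ)+1)⁻¹) • p₀ + (1 - ((k:ℝ)+1)⁻¹) • w ∈ interior K :=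
          hconv.combo_interior_self_mem_interior hp₀ hmem hak (by linarith) (by ring)
        exact ⟨ρ⁻¹, inv_pos.2 hρpos, _, hintk, rfl⟩
      have hnotC : v ∉ C := by
        rintro ⟨t, ht, p, hp, hveq⟩
        obtain ⟨ε, hε, hball⟩ := Metric.isOpen_iff.1 isOpen_interior p hp
        have hq' : p + (ε/2) • u ∈ K := by
          apply interior_subset (hball ?_)
          rw [mem_ball, dist_eq_norm, add_sub_cancel_left, norm_smul, hu1,
            Real.norm_eq_abs, abs_of_pos (by linarith), mul_one]
          linarith
        have h5 : ⟪p, u⟫ + ε/2 ≤ 0 := by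
          have h6 := hKle _ hq'
          rwa [inner_add_left, real_inner_smul_left,
            real_inner_self_eq_norm_mul_norm, hu1, mul_one, mul_one] at h6
        have hpu : ⟪p, u⟫ < 0 := by linarith
        have h7 : ⟪v, u⟫ < 0 := by
          rw [hveq, real_inner_smul_left]
          exact mul_neg_of_pos_of_neg ht hpu
        rw [hvu] at h7
        exact lt_irrefl _ h7
      exact ⟨hvnorm, by rw [hCo.frontier_eq]; exact ⟨hclosureC, hnotC⟩⟩
  -- conclude
  apply integral_eq_zero_of_ae
  rw [Filter.EventuallyEq, ae_iff]
  simp only [Pi.zero_apply]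
  set S : Set (EuclideanSpace ℝ (Fin (m+1))) := {v | ¬ (radialFn K v ^ q = 0)} with hSdef
  have hsub2 : S ∩ (N ∪ Z) ⊆ N := by
    rintro v ⟨hvS, hNZ⟩
    rcases hNZ with h | h
    · exact h
    · exfalso
      apply hvS
      have : radialFn K v = 0 := h
      rw [this, Real.zero_rpow hq.ne']
  have step1 : (μH[(m:ℝ)]).restrict A S ≤ (μH[(m:ℝ)]).restrict (N ∪ Z) S :=
    Measure.le_iff'.1 (Measure.restrict_mono hAsub le_rfl) S
  have step2 : (μH[(m:ℝ)]).restrict (N ∪ Z) S = μH[(m:ℝ)] (S ∩ (N ∪ Z)) :=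
    Measure.restrict_apply' (hNmeas.union hZmeas)
  have step3 : μH[(m:ℝ)] (S ∩ (N ∪ Z)) ≤ μH[(m:ℝ)] N := measure_mono hsub2
  have : (μH[(m:ℝ)]).restrict A S = 0 := by
    apply le_antisymm _ (by simp)
    calc (μH[(m:ℝ)]).restrict A S ≤ μH[(m:ℝ)] (S ∩ (N ∪ Z)) := step2 ▸ step1
      _ ≤ μH[(m:ℝ)] N := step3
      _ = 0 := hN
  exact this
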